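/- For every integer k ≥ 1, the function f(τ) = τ^{√(2(k+1))/2}/(1-√τ) is convex on (0,1). -/

import Mathlib

open Filter Finset Real

private lemma convexOn_of_tendsto {s : Set ℝ} (hs : Convex ℝ s) {F : ℕ → ℝ → ℝ} {f : ℝ → ℝ}
    (hF : ∀ n, ConvexOn ℝ s (F n))
    (hlim : ∀ x ∈ s, Tendsto (fun n => F n x) atTop (nhds (f x))) : ConvexOn ℝ s f := by
  refine ⟨hs, fun x hx y hy a b ha hb hab => ?_⟩
  refine le_of_tendsto_of_tendsto' (hlim _ (hs hx hy ha hb hab)) ?_ (fun n => (hF n).2 hx hy ha hb hab)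
  exact ((hlim x hx).const_mul a).add ((hlim y hy).const_mul b)

private lemma convexOn_partial (p : ℝ) (hp : 1 ≤ p) (n : ℕ) :
    ConvexOn ℝ (Set.Ioo (0:ℝ) 1) (fun τ => ∑ i ∈ range n, τ ^ (p + i / 2)) := by
  induction n with
  | zero => simpa using convexOn_const 0 (convex_Ioo 0 1)
  | succ m ih =>
    simp only [sum_range_succ]
    refine ih.add ?_
    have : (1:ℝ) ≤ p + m / 2 := le_add_of_le_of_nonneg hp (by positivity)
    exact (convexOn_rpow this).subset (fun x hx => le_of_lt hx.1) (convex_Ioo 0 1)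

/-- For every integer `k ≥ 1`, the function
`f(τ) = τ ^ (√(2(k+1))/2) / (1 - √τ)` is convex on `(0, 1)`. -/
theorem convexOn_ggk_approx (k : ℕ) (hk : 1 ≤ k) :
    ConvexOn ℝ (Set.Ioo (0:ℝ) 1)
      (fun τ => τ ^ (Real.sqrt (2 * (k + 1)) / 2) / (1 - Real.sqrt τ)) := by
  set p : ℝ := Real.sqrt (2 * (k + 1)) / 2 with hp
  have hk1 : (1:ℝ) ≤ (k:ℝ) := by exact_mod_cast hk
  have h4 : (4:ℝ) ≤ 2 * ((k:ℝ) + 1) := by linarith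
  have hs2 : (2:ℝ) ≤ Real.sqrt (2 * ((k:ℝ) + 1)) := by
    have : Real.sqrt 4 ≤ Real.sqrt (2 * ((k:ℝ) + 1)) := Real.sqrt_le_sqrt h4
    rwa [show (4:ℝ) = 2 ^ 2 by norm_num, Real.sqrt_sq (by norm_num)] at this
  have hp1 : (1:ℝ) ≤ p := by rw [hp]; linarith
  refine convexOn_of_tendsto (convex_Ioo 0 1) (convexOn_partial p hp1) ?_
  intro τ hτ
  obtain ⟨h0, h1⟩ := hτ
  have hsτ0 : 0 ≤ Real.sqrt τ := Real.sqrt_nonneg τ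
  have hsτ1 : Real.sqrt τ < 1 := by
    rw [show (1:ℝ) = Real.sqrt 1 by simp]
    exact Real.sqrt_lt_sqrt h0.le h1
  have hgeom : HasSum (fun i : ℕ => Real.sqrt τ ^ i) (1 - Real.sqrt τ)⁻¹ :=
    hasSum_geometric_of_lt_one hsτ0 hsτ1
  have hsum : HasSum (fun i : ℕ => τ ^ (p + i / 2)) (τ ^ p / (1 - Real.sqrt τ)) := by
    have := hgeom.mul_left (τ ^ p)
    rw [div_eq_mul_inv]
    convert this using 2 with i
    case e'_3 => exact rfl
    rw [Real.rpow_add h0, Real.sqrt_eq_rpow]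
    congr 1
    rw [← Real.rpow_natCast (τ ^ (1/2:ℝ)) i, ← Real.rpow_mul h0.le]
    congr 1
    ring
  exact hsum.tendsto_sum_nat
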